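/- Let ψ be a formal power series with ψ(0) ≠ 0 and let g with g(0)=0 satisfy g(z) = zψ(g(z)). Then for any formal power series H and all n ≥ 1, the n-th coefficient of H(g(z)) equals (1/n) times the (n−1)-th coefficient of H'(z)·ψ(z)^n. -/

import Mathlib

open PowerSeries

/-- Composition H(g) of formal power series, valid when g has zero constant term. -/
noncomputable def psComp {K : Type*} [CommRing K] (H g : PowerSeries K) : PowerSeries K :=
  PowerSeries.mk fun n => ∑ k ∈ Finset.range (n + 1),
    (PowerSeries.coeff k H) * (PowerSeries.coeff n (g ^ k))

namespace LagrangeAux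

open Finset

variable {K : Type*} [Field K]

lemma coeff_pow_eq_zero {g : PowerSeries K} (hg : constantCoeff g = 0) {n d : ℕ} (h : n < d) :
    coeff n (g ^ d) = 0 := by
  have hdvd : (X : PowerSeries K) ^ d ∣ g ^ d := pow_dvd_pow_of_dvd (X_dvd_iff.mpr hg) d
  exact X_pow_dvd_iff.mp hdvd n h

lemma coeff_psComp (H g : PowerSeries K) (n : ℕ) :
    coeff n (psComp H g) = ∑ k ∈ range (n + 1), coeff k H * coeff n (g ^ k) :=
  coeff_mk _ _

lemma coeff_psComp' {g : PowerSeries K} (hg : constantCoeff g = 0) (H : PowerSeries K)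
    {n N : ℕ} (h : n < N) :
    coeff n (psComp H g) = ∑ k ∈ range N, coeff k H * coeff n (g ^ k) := by
  rw [coeff_psComp]
  apply Finset.sum_subset (Finset.range_subset_range.mpr h)
  intro k _ hnk
  rw [Finset.mem_range, not_lt] at hnk
  rw [coeff_pow_eq_zero hg (by omega), mul_zero]

lemma coeff_psComp_eval {g : PowerSeries K} (hg : constantCoeff g = 0) (H : PowerSeries K)
    {n N : ℕ} (h : n < N) :
    coeff n (psComp H g) = coeff n (Polynomial.eval₂ C g (trunc N H)) := by
  rw [eval₂_trunc_eq_sum_range, map_sum, coeff_psComp' hg H h]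
  exact Finset.sum_congr rfl fun k _ => (coeff_C_mul _ _ _).symm

lemma coeff_eval₂_eq_zero {g : PowerSeries K} (hg : constantCoeff g = 0) {n : ℕ}
    {P : Polynomial K} (h : ∀ k ≤ n, P.coeff k = 0) :
    coeff n (Polynomial.eval₂ C g P) = 0 := by
  rw [Polynomial.eval₂_eq_sum, Polynomial.sum, map_sum]
  apply Finset.sum_eq_zero
  intro k _
  rcases le_or_gt k n with hk | hk
  · rw [h k hk, map_zero, zero_mul, map_zero]
  · rw [coeff_C_mul, coeff_pow_eq_zero hg hk, mul_zero]

lemma coeff_eval₂_congr {g : PowerSeries K} (hg : constantCoeff g = 0) {n : ℕ}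
    {P Q : Polynomial K} (h : ∀ k ≤ n, P.coeff k = Q.coeff k) :
    coeff n (Polynomial.eval₂ C g P) = coeff n (Polynomial.eval₂ C g Q) := by
  have h0 : coeff n (Polynomial.eval₂ C g (P - Q)) = 0 := by
    apply coeff_eval₂_eq_zero hg
    intro k hk
    rw [Polynomial.coeff_sub, h k hk, sub_self]
  rw [Polynomial.eval₂_sub, map_sub, sub_eq_zero] at h0
  exact h0

lemma psComp_mul {g : PowerSeries K} (hg : constantCoeff g = 0) (A B : PowerSeries K) :
    psComp (A * B) g = psComp A g * psComp B g := by
  ext n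
  rw [coeff_psComp_eval hg (A * B) (Nat.lt_succ_self n)]
  have step : coeff n (Polynomial.eval₂ C g (trunc (n + 1) (A * B)))
      = coeff n (Polynomial.eval₂ C g (trunc (n + 1) A * trunc (n + 1) B)) := by
    apply coeff_eval₂_congr hg
    intro k hk
    rw [← trunc_trunc_mul_trunc, coeff_trunc, if_pos (by omega), ← Polynomial.coe_mul,
      Polynomial.coeff_coe]
  rw [step, Polynomial.eval₂_mul, PowerSeries.coeff_mul, PowerSeries.coeff_mul]
  apply Finset.sum_congr rfl
  intro p hp
  rw [Finset.HasAntidiagonal.mem_antidiagonal] at hp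
  rw [← coeff_psComp_eval hg A (show p.1 < n + 1 by omega),
    ← coeff_psComp_eval hg B (show p.2 < n + 1 by omega)]

lemma psComp_one (g : PowerSeries K) : psComp 1 g = 1 := by
  ext n
  rw [coeff_psComp, Finset.sum_eq_single 0]
  · simp
  · intro k _ hk
    rw [coeff_one, if_neg hk, zero_mul]
  · intro h
    exact absurd (Finset.mem_range.mpr (Nat.succ_pos n)) h

lemma psComp_pow {g : PowerSeries K} (hg : constantCoeff g = 0) (A : PowerSeries K) (m : ℕ) :
    psComp (A ^ m) g = (psComp A g) ^ m := by
  induction m with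
  | zero => simpa using psComp_one g
  | succ m ih => rw [pow_succ, pow_succ, psComp_mul hg, ih]

lemma psComp_X {g : PowerSeries K} (hg : constantCoeff g = 0) : psComp X g = g := by
  ext n
  rw [coeff_psComp, Finset.sum_eq_single 1]
  · rw [coeff_X, if_pos rfl, one_mul, pow_one]
  · intro k _ hk
    rw [coeff_X, if_neg hk, zero_mul]
  · intro h1
    rw [Finset.mem_range] at h1
    have hn : n = 0 := by omega
    subst hn
    rw [coeff_X, if_pos rfl, one_mul, pow_one, coeff_zero_eq_constantCoeff_apply, hg]

lemma psComp_X_right (A : PowerSeries K) : psComp A X = A := by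
  ext n
  rw [coeff_psComp, Finset.sum_eq_single n]
  · rw [coeff_X_pow, if_pos rfl, mul_one]
  · intro k _ hk
    rw [coeff_X_pow, if_neg (fun h => hk h.symm), mul_zero]
  · intro h
    exact absurd (Finset.mem_range.mpr (Nat.lt_succ_self n)) h

lemma coeff_zero_psComp (H g : PowerSeries K) : coeff 0 (psComp H g) = coeff 0 H := by
  rw [coeff_psComp]
  simp

lemma psComp_assoc {b c : PowerSeries K} (hb : constantCoeff b = 0)
    (hc : constantCoeff c = 0) (A : PowerSeries K) :
    psComp (psComp A b) c = psComp A (psComp b c) := by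
  have hbc : constantCoeff (psComp b c) = 0 := by
    rw [← coeff_zero_eq_constantCoeff_apply, coeff_zero_psComp,
      coeff_zero_eq_constantCoeff_apply, hb]
  ext n
  rw [coeff_psComp, coeff_psComp' hbc A (Nat.lt_succ_self n)]
  have hstep : ∀ k ∈ range (n + 1), coeff k (psComp A b) * coeff n (c ^ k)
      = ∑ m ∈ range (n + 1), coeff m A * (coeff k (b ^ m) * coeff n (c ^ k)) := by
    intro k hk
    rw [Finset.mem_range] at hk
    rw [coeff_psComp' hb A (show k < n + 1 by omega), Finset.sum_mul]
    exact Finset.sum_congr rfl fun m _ => by ring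
  rw [Finset.sum_congr rfl hstep, Finset.sum_comm]
  apply Finset.sum_congr rfl
  intro m _
  rw [← Finset.mul_sum, ← psComp_pow hc, coeff_psComp]

lemma coeff_pow_self {c : PowerSeries K} (hc : constantCoeff c = 0) (n : ℕ) :
    coeff n (c ^ n) = (coeff 1 c) ^ n := by
  induction n with
  | zero => simp
  | succ n ih =>
    rw [pow_succ, PowerSeries.coeff_mul, Finset.sum_eq_single (n, 1)]
    · rw [ih, pow_succ]
    · rintro ⟨i, j⟩ hij hne
      rw [Finset.HasAntidiagonal.mem_antidiagonal] at hij
      rcases lt_trichotomy i n with h | h | h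
      · rw [coeff_pow_eq_zero hc h, zero_mul]
      · subst h
        have : j = 1 := by omega
        subst this
        exact absurd rfl hne
      · have hj : j = 0 := by omega
        subst hj
        rw [coeff_zero_eq_constantCoeff_apply, hc, mul_zero]
    · intro h
      exact absurd (Finset.HasAntidiagonal.mem_antidiagonal.mpr (by omega)) h

lemma coeff_mul_range (m : ℕ) (U V : PowerSeries K) :
    coeff m (U * V) = ∑ r ∈ Finset.range (m + 1), coeff r U * coeff (m - r) V := by
  rw [PowerSeries.coeff_mul, Finset.Nat.sum_antidiagonal_eq_sum_range_succ_mk]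

lemma psComp_cancel {c : PowerSeries K} (hc : constantCoeff c = 0) (hc1 : coeff 1 c ≠ 0)
    {A B : PowerSeries K} (h : psComp A c = psComp B c) : A = B := by
  ext n
  induction n using Nat.strong_induction_on with
  | _ n ih =>
    have hn := congrArg (coeff n) h
    rw [coeff_psComp, coeff_psComp, Finset.sum_range_succ, Finset.sum_range_succ] at hn
    have hsum : ∑ k ∈ range n, coeff k A * coeff n (c ^ k)
        = ∑ k ∈ range n, coeff k B * coeff n (c ^ k) :=
      Finset.sum_congr rfl fun k hk => by rw [ih k (Finset.mem_range.mp hk)]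
    rw [hsum] at hn
    exact mul_right_cancel₀
      (by rw [coeff_pow_self hc]; exact pow_ne_zero n hc1) (add_left_cancel hn)

end LagrangeAux

/-- Lagrange inversion for compositions: if g(0)=0 solves g = z·ψ(g)
with ψ(0) ≠ 0, then for any formal power series H and n ≥ 1,
coeff_n(H(g)) = (1/n)·coeff_{n−1}(H'·ψ^n). -/
theorem stmt_3 {K : Type*} [Field K] [CharZero K] (ψ g : PowerSeries K)
    (hg0 : PowerSeries.constantCoeff g = 0)
    (hψ0 : PowerSeries.constantCoeff ψ ≠ 0)
    (hlag : g = PowerSeries.X * psComp ψ g) :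
    ∀ H : PowerSeries K, ∀ n : ℕ, 1 ≤ n →
      PowerSeries.coeff n (psComp H g) =
        (1 / (n : K)) * PowerSeries.coeff (n - 1) (H.derivativeFun * ψ ^ n) := by
  classical
  have hψinv : ψ * ψ⁻¹ = 1 := PowerSeries.mul_inv_cancel ψ hψ0
  have hg1 : PowerSeries.coeff 1 g ≠ 0 := by
    have h1 : PowerSeries.coeff 1 g = PowerSeries.coeff 0 (psComp ψ g) := by
      conv_lhs => rw [hlag]
      rw [PowerSeries.coeff_succ_X_mul]
    rw [h1, LagrangeAux.coeff_zero_psComp, coeff_zero_eq_constantCoeff_apply]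
    exact hψ0
  set f : PowerSeries K := X * ψ⁻¹ with hfdef
  have hf0 : PowerSeries.constantCoeff f = 0 := by
    rw [hfdef, map_mul, constantCoeff_X, zero_mul]
  have hfg : psComp f g = X := by
    calc psComp f g = g * psComp ψ⁻¹ g := by
          rw [hfdef, LagrangeAux.psComp_mul hg0, LagrangeAux.psComp_X hg0]
      _ = X * psComp ψ g * psComp ψ⁻¹ g := by rw [← hlag]
      _ = X := by
          rw [mul_assoc, ← LagrangeAux.psComp_mul hg0, hψinv, LagrangeAux.psComp_one, mul_one]
  have hgf : psComp g f = X := by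
    apply LagrangeAux.psComp_cancel hg0 hg1
    rw [LagrangeAux.psComp_assoc hf0 hg0 g, hfg, LagrangeAux.psComp_X_right,
      LagrangeAux.psComp_X hg0]
  have hDf : d⁄dX K f = ψ⁻¹ + X * (-ψ⁻¹ ^ 2 * d⁄dX K ψ) := by
    rw [hfdef, Derivation.leibniz, derivative_X, derivative_inv', smul_eq_mul, smul_eq_mul,
      mul_one, add_comm]
  have hcancel : ∀ a b : ℕ, a ≤ b → ψ⁻¹ ^ a * ψ ^ b = ψ ^ (b - a) := by
    intro a b hab
    have hb : ψ ^ b = ψ ^ a * ψ ^ (b - a) := by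
      rw [← pow_add]
      congr 1
      omega
    rw [hb, ← mul_assoc, ← mul_pow, PowerSeries.inv_mul_cancel ψ hψ0, one_pow, one_mul]
  intro H n hn
  have hn0 : (n : K) ≠ 0 := Nat.cast_ne_zero.mpr (by omega)
  have hrange : n - 1 + 1 = n := by omega
  -- the key claim about the coefficients of d(f^m) * ψ^n
  have claim : ∀ m ≤ n, PowerSeries.coeff (n - 1) (d⁄dX K (f ^ m) * ψ ^ n)
      = if m = n then (n : K) else 0 := by
    intro m hm
    rcases Nat.eq_zero_or_pos m with rfl | hpos
    · rw [if_neg (by omega), pow_zero]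
      simp
    · obtain ⟨m', rfl⟩ : ∃ m', m = m' + 1 := ⟨m - 1, by omega⟩
      have hexp : d⁄dX K (f ^ (m' + 1)) * ψ ^ n
          = (m' + 1) • (X ^ m' * (ψ⁻¹ ^ (m' + 1) * ψ ^ n
              - X * (d⁄dX K ψ * (ψ⁻¹ ^ (m' + 2) * ψ ^ n)))) := by
        rw [Derivation.leibniz_pow, Nat.add_sub_cancel, smul_eq_mul, hDf, smul_mul_assoc]
        congr 1
        rw [hfdef]
        ring
      rw [hexp, map_nsmul, nsmul_eq_mul]
      have hidx : n - 1 = (n - 1 - m') + m' := by omega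
      rw [hidx, PowerSeries.coeff_X_pow_mul]
      rcases eq_or_lt_of_le hm with heq | hlt
      · -- m' + 1 = n
        rw [if_pos heq, hcancel (m' + 1) n (by omega)]
        have hj0 : n - 1 - m' = 0 := by omega
        have hnm : n - (m' + 1) = 0 := by omega
        rw [hj0, hnm, pow_zero]
        have hc0 : PowerSeries.coeff 0
            ((1 : PowerSeries K) - X * (d⁄dX K ψ * (ψ⁻¹ ^ (m' + 2) * ψ ^ n))) = 1 := by
          rw [map_sub, coeff_zero_eq_constantCoeff_apply, coeff_zero_eq_constantCoeff_apply,
            map_one, map_mul, constantCoeff_X, zero_mul, sub_zero]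
        rw [hc0, mul_one, heq]
      · -- m' + 1 < n
        rw [if_neg (by omega), hcancel (m' + 1) n (by omega), hcancel (m' + 2) n (by omega)]
        set j : ℕ := n - (m' + 1) with hj
        have hj2 : n - (m' + 2) = j - 1 := by omega
        have hjm : n - 1 - m' = j := by omega
        have hj1 : j - 1 + 1 = j := by omega
        rw [hj2, hjm, map_sub]
        have hXmul := PowerSeries.coeff_succ_X_mul (j - 1)
          (d⁄dX K ψ * ψ ^ (j - 1)) (R := K)
        rw [hj1] at hXmul
        rw [hXmul]
        suffices hs : PowerSeries.coeff (j - 1) (d⁄dX K ψ * ψ ^ (j - 1))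
            = PowerSeries.coeff j (ψ ^ j) by
          rw [hs, sub_self, mul_zero]
        have hd : d⁄dX K (ψ ^ j) = j • (ψ ^ (j - 1) * d⁄dX K ψ) := by
          rw [Derivation.leibniz_pow, smul_eq_mul]
        have hcd := PowerSeries.coeff_derivative (ψ ^ j) (j - 1)
        rw [hj1, hd, map_nsmul, nsmul_eq_mul] at hcd
        have hjK : (j : K) ≠ 0 := Nat.cast_ne_zero.mpr (by omega)
        have hcast : ((j - 1 : ℕ) : K) + 1 = (j : K) := by
          rw [← Nat.cast_one (R := K), ← Nat.cast_add, hj1]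
        apply mul_left_cancel₀ hjK
        calc (j : K) * PowerSeries.coeff (j - 1) (d⁄dX K ψ * ψ ^ (j - 1))
            = (j : K) * PowerSeries.coeff (j - 1) (ψ ^ (j - 1) * d⁄dX K ψ) := by
              rw [mul_comm (d⁄dX K ψ)]
          _ = PowerSeries.coeff j (ψ ^ j) * (((j - 1 : ℕ) : K) + 1) := hcd
          _ = (j : K) * PowerSeries.coeff j (ψ ^ j) := by rw [hcast]; ring
  -- the key Lagrange identity for coefficients of powers of g
  have key : ∀ k, 1 ≤ k → k ≤ n →
      (n : K) * PowerSeries.coeff n (g ^ k)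
        = (k : K) * PowerSeries.coeff (n - k) (ψ ^ n) := by
    intro k hk1 hkn
    have hPX : psComp (g ^ k) f = X ^ k := by rw [LagrangeAux.psComp_pow hf0, hgf]
    have wayA : PowerSeries.coeff (n - 1) (d⁄dX K ((X : PowerSeries K) ^ k) * ψ ^ n)
        = (k : K) * PowerSeries.coeff (n - k) (ψ ^ n) := by
      rw [Derivation.leibniz_pow, derivative_X, smul_eq_mul, mul_one, smul_mul_assoc,
        map_nsmul, nsmul_eq_mul]
      have hidx : n - 1 = (n - k) + (k - 1) := by omega
      rw [hidx, PowerSeries.coeff_X_pow_mul]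
    have wayB : PowerSeries.coeff (n - 1) (d⁄dX K (psComp (g ^ k) f) * ψ ^ n)
        = PowerSeries.coeff n (g ^ k) * (n : K) := by
      rw [LagrangeAux.coeff_mul_range, hrange]
      calc (∑ r ∈ Finset.range n, PowerSeries.coeff r (d⁄dX K (psComp (g ^ k) f))
              * PowerSeries.coeff (n - 1 - r) (ψ ^ n))
          = ∑ r ∈ Finset.range n, ∑ m ∈ Finset.range (n + 1),
              PowerSeries.coeff m (g ^ k) * (PowerSeries.coeff (r + 1) (f ^ m)
                * ((r : K) + 1) * PowerSeries.coeff (n - 1 - r) (ψ ^ n)) := by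
            apply Finset.sum_congr rfl
            intro r hr
            rw [Finset.mem_range] at hr
            rw [PowerSeries.coeff_derivative,
              LagrangeAux.coeff_psComp' hf0 _ (show r + 1 < n + 1 by omega), Finset.sum_mul,
              Finset.sum_mul]
            exact Finset.sum_congr rfl fun m _ => by ring
        _ = ∑ m ∈ Finset.range (n + 1), PowerSeries.coeff m (g ^ k)
              * ∑ r ∈ Finset.range n, PowerSeries.coeff (r + 1) (f ^ m)
                * ((r : K) + 1) * PowerSeries.coeff (n - 1 - r) (ψ ^ n) := by
            rw [Finset.sum_comm]
            exact Finset.sum_congr rfl fun m _ => (Finset.mul_sum _ _ _).symm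
        _ = ∑ m ∈ Finset.range (n + 1), PowerSeries.coeff m (g ^ k)
              * PowerSeries.coeff (n - 1) (d⁄dX K (f ^ m) * ψ ^ n) := by
            apply Finset.sum_congr rfl
            intro m _
            congr 1
            rw [LagrangeAux.coeff_mul_range, hrange]
            exact Finset.sum_congr rfl fun r _ => by
              rw [PowerSeries.coeff_derivative]
        _ = PowerSeries.coeff n (g ^ k) * (n : K) := by
            rw [Finset.sum_congr rfl (fun m hm => by
              rw [claim m (by rw [Finset.mem_range] at hm; omega)])]
            simp only [mul_ite, mul_zero]
            rw [Finset.sum_ite_eq' (Finset.range (n + 1)) n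
              (fun m => PowerSeries.coeff m (g ^ k) * (n : K))]
            rw [if_pos (Finset.self_mem_range_succ n)]
    rw [hPX, wayA] at wayB
    rw [mul_comm]
    exact wayB.symm
  -- assemble
  rw [LagrangeAux.coeff_psComp, Finset.sum_range_succ']
  have hF0 : PowerSeries.coeff 0 H * PowerSeries.coeff n (g ^ 0) = 0 := by
    rw [pow_zero, PowerSeries.coeff_one, if_neg (by omega), mul_zero]
  rw [hF0, add_zero]
  have hRHS : PowerSeries.coeff (n - 1) (H.derivativeFun * ψ ^ n)
      = ∑ r ∈ Finset.range n, PowerSeries.coeff (r + 1) H * ((r : K) + 1)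
          * PowerSeries.coeff (n - 1 - r) (ψ ^ n) := by
    rw [LagrangeAux.coeff_mul_range, hrange]
    exact Finset.sum_congr rfl fun r _ => by
      rw [show H.derivativeFun = d⁄dX K H from rfl, PowerSeries.coeff_derivative]
  rw [hRHS, Finset.mul_sum]
  apply Finset.sum_congr rfl
  intro r hr
  rw [Finset.mem_range] at hr
  have hk := key (r + 1) (by omega) (by omega)
  rw [show n - (r + 1) = n - 1 - r from by omega] at hk
  rw [div_mul_eq_mul_div, one_mul, eq_div_iff hn0]
  have hcast : ((r : K) + 1) = ((r + 1 : ℕ) : K) := by push_cast; ring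
  rw [hcast]
  linear_combination (PowerSeries.coeff (r + 1) H) * hk
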